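/- Let n ≥ 4 be an even integer. Then gcd(2n, C(2n,3), C(2n,5), …, C(2n,n−3), 2^{n−1}) = 2^{v₂(n)+1}, where the binomial coefficients range over odd indices k with 3 ≤ k ≤ n−3 and v₂ denotes the 2-adic valuation. -/

import Mathlib

private lemma aux_lt_pow : ∀ m : ℕ, 4 ≤ m → m < 2 ^ (m - 1) := by
  intro m hm
  induction m with
  | zero => omega
  | succ k ih =>
    rcases Nat.lt_or_ge k 4 with h | h
    · interval_cases k <;> first | omega | norm_num
    · have := ih (by omega)
      have hk : k + 1 - 1 = (k - 1) + 1 := by omega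
      rw [hk, pow_succ]
      omega

theorem stmt_8 (n : ℕ) (hn : 4 ≤ n) (hne : Even n) :
    Nat.gcd (2 * n)
      (Nat.gcd (((Finset.Icc 3 (n - 3)).filter (fun k => Odd k)).gcd
          (fun k => (2 * n).choose k))
        (2 ^ (n - 1))) = 2 ^ (padicValNat 2 n + 1) := by
  have hn0 : n ≠ 0 := by omega
  set v := padicValNat 2 n with hv
  have hvd : 2 ^ v ∣ n := pow_padicValNat_dvd
  have hvle : 2 ^ v ≤ n := Nat.le_of_dvd (by omega) hvd
  have hvn : v + 1 ≤ n - 1 := by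
    have h1 : n < 2 ^ (n - 1) := aux_lt_pow n hn
    have : 2 ^ v < 2 ^ (n - 1) := lt_of_le_of_lt hvle h1
    have := (pow_lt_pow_iff_right₀ (a := 2) one_lt_two).mp this
    omega
  have hdvd2n : 2 ^ (v + 1) ∣ 2 * n := by
    rw [pow_succ, mul_comm (2 ^ v) 2]
    exact Nat.mul_dvd_mul_left 2 hvd
  apply Nat.dvd_antisymm
  · -- gcd divides 2^(v+1)
    have h2 : Nat.gcd (2 * n)
        (Nat.gcd (((Finset.Icc 3 (n - 3)).filter (fun k => Odd k)).gcd
          (fun k => (2 * n).choose k)) (2 ^ (n - 1))) ∣ 2 ^ (n - 1) :=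
      (Nat.gcd_dvd_right _ _).trans (Nat.gcd_dvd_right _ _)
    have h1 : Nat.gcd (2 * n)
        (Nat.gcd (((Finset.Icc 3 (n - 3)).filter (fun k => Odd k)).gcd
          (fun k => (2 * n).choose k)) (2 ^ (n - 1))) ∣ 2 * n :=
      Nat.gcd_dvd_left _ _
    obtain ⟨j, hj, hG⟩ := (Nat.dvd_prime_pow Nat.prime_two).mp h2
    rw [hG] at h1 ⊢
    apply pow_dvd_pow
    have h2n0 : 2 * n ≠ 0 := by omega
    have := (Nat.Prime.pow_dvd_iff_le_factorization Nat.prime_two h2n0).mp h1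
    rw [Nat.factorization_def _ Nat.prime_two] at this
    have hmul : padicValNat 2 (2 * n) = 1 + v := by
      rw [padicValNat.mul (by norm_num) hn0, padicValNat.self one_lt_two]
    omega
  · -- 2^(v+1) divides each piece
    refine Nat.dvd_gcd hdvd2n (Nat.dvd_gcd ?_ (pow_dvd_pow 2 hvn))
    apply Finset.dvd_gcd
    intro k hk
    simp only [Finset.mem_filter, Finset.mem_Icc] at hk
    obtain ⟨⟨hk3, hkn⟩, hkodd⟩ := hk
    have hid : 2 * n * Nat.choose (2 * n - 1) (k - 1) = Nat.choose (2 * n) k * k := by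
      have := Nat.add_one_mul_choose_eq (2 * n - 1) (k - 1)
      have e1 : 2 * n - 1 + 1 = 2 * n := by omega
      have e2 : k - 1 + 1 = k := by omega
      rw [e1, e2] at this
      exact this
    have hcop : Nat.Coprime (2 ^ (v + 1)) k := by
      apply Nat.Coprime.pow_left
      exact Nat.coprime_two_left.mpr hkodd
    exact hcop.dvd_of_dvd_mul_right (hid ▸ hdvd2n.trans (Dvd.intro _ rfl) : 2 ^ (v + 1) ∣ Nat.choose (2 * n) k * k)
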